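/- arXiv:2205.09558 — 2 statements merged into one kernel-verified Lean document; each statement's English description precedes it below -/
import Mathlib

section
/- Let θ ∈ ℝ² be a unit vector, K > 1, and ξ ∈ ℝ² with ξ·θ < 0. Define ω₂ = |ξ|²/( -ξ·θ + √((ξ·θ)² + |ξ|²(K²-1)) ) and ζ₂ = ((-ξ·θ + √((ξ·θ)² + |ξ|²(K²-1)))/|ξ|²)·(ξ/K) + θ/K. Then ω₂ > 0, |ζ₂| = 1, and ξ = ω₂(Kζ₂ - θ). -/
theorem stmt_2 (θ ξ : EuclideanSpace ℝ (Fin 2)) (K : ℝ) (hθ : ‖θ‖ = 1) (hK : 1 < K)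
    (hξθ : (inner ℝ ξ θ : ℝ) < 0) :
    0 < ‖ξ‖ ^ 2 / (-(inner ℝ ξ θ : ℝ) + Real.sqrt ((inner ℝ ξ θ : ℝ) ^ 2 + ‖ξ‖ ^ 2 * (K ^ 2 - 1))) ∧
    ‖(((-(inner ℝ ξ θ : ℝ) + Real.sqrt ((inner ℝ ξ θ : ℝ) ^ 2 + ‖ξ‖ ^ 2 * (K ^ 2 - 1))) / ‖ξ‖ ^ 2) •
        (K⁻¹ • ξ) + K⁻¹ • θ : EuclideanSpace ℝ (Fin 2))‖ = 1 ∧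
    ξ = (‖ξ‖ ^ 2 / (-(inner ℝ ξ θ : ℝ) + Real.sqrt ((inner ℝ ξ θ : ℝ) ^ 2 + ‖ξ‖ ^ 2 * (K ^ 2 - 1)))) •
      (K • (((-(inner ℝ ξ θ : ℝ) + Real.sqrt ((inner ℝ ξ θ : ℝ) ^ 2 + ‖ξ‖ ^ 2 * (K ^ 2 - 1))) / ‖ξ‖ ^ 2) •
        (K⁻¹ • ξ) + K⁻¹ • θ) - θ) := by
  have hξ0 : ξ ≠ 0 := fun h => by simp [h] at hξθ
  set a : ℝ := (inner ℝ ξ θ : ℝ) with ha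
  have hξn : 0 < ‖ξ‖ := norm_pos_iff.mpr hξ0
  have hξ2 : (0:ℝ) < ‖ξ‖ ^ 2 := by positivity
  have hK0 : K ≠ 0 := by linarith
  set r : ℝ := Real.sqrt (a ^ 2 + ‖ξ‖ ^ 2 * (K ^ 2 - 1)) with hr
  have hnn : (0:ℝ) ≤ a ^ 2 + ‖ξ‖ ^ 2 * (K ^ 2 - 1) := by nlinarith [mul_pos hξ2 (show (0:ℝ) < K ^ 2 - 1 by nlinarith), sq_nonneg a]
  have hr2 : r ^ 2 = a ^ 2 + ‖ξ‖ ^ 2 * (K ^ 2 - 1) := Real.sq_sqrt hnn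
  have hrnn : 0 ≤ r := Real.sqrt_nonneg _
  set s : ℝ := -a + r with hs
  have hs0 : 0 < s := by
    have : 0 < -a := by linarith
    linarith
  have key : s ^ 2 + 2 * s * a = ‖ξ‖ ^ 2 * (K ^ 2 - 1) := by
    rw [hs]; linear_combination hr2
  refine ⟨div_pos hξ2 hs0, ?_, ?_⟩
  · set c : ℝ := s / ‖ξ‖ ^ 2 with hc
    have hnsq : ‖c • (K⁻¹ • ξ) + K⁻¹ • θ‖ ^ 2 = 1 := by
      rw [norm_add_sq_real]
      rw [norm_smul, norm_smul, norm_smul]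
      rw [real_inner_smul_left, real_inner_smul_left, real_inner_smul_right]
      have hθ2 : ‖θ‖ = 1 := hθ
      rw [hθ2]
      have h1 : ‖c‖ = c := by
        rw [Real.norm_eq_abs]; exact abs_of_nonneg (le_of_lt (div_pos hs0 hξ2))
      have h2 : ‖K⁻¹‖ = K⁻¹ := by
        rw [Real.norm_eq_abs]; exact abs_of_nonneg (le_of_lt (inv_pos.mpr (by linarith)))
      rw [h1, h2, ← ha]
      have hc2 : c = s / ‖ξ‖ ^ 2 := rfl
      field_simp [hc2]
      rw [hc2]
      field_simp
      linear_combination key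
    have hn : 0 ≤ ‖c • (K⁻¹ • ξ) + K⁻¹ • θ‖ := norm_nonneg _
    nlinarith [hnsq, hn]
  · set c : ℝ := s / ‖ξ‖ ^ 2 with hc
    have h1 : K • (c • (K⁻¹ • ξ) + K⁻¹ • θ) - θ = c • ξ := by
      match_scalars <;> field_simp <;> ring
    rw [h1, smul_smul]
    have : ‖ξ‖ ^ 2 / s * c = 1 := by
      rw [hc]; field_simp
    rw [this, one_smul]
end

section
/- Let θ ∈ ℝ² be a unit vector, K > 1, and ξ ∈ ℝ² with ξ·θ < 0. Let ζ₁ = θ - (2(ξ·θ)/|ξ|²)ξ and ζ₂ = the unit vector with ξ = ω₂(Kζ₂ - θ) for the unique ω₂ > 0. Then ζ₁·ζ₂ ≥ 1/K; in particular ζ₁·ζ₂ ≠ 0. -/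
theorem stmt_4 (θ ξ : EuclideanSpace ℝ (Fin 2)) (K : ℝ) (hθ : ‖θ‖ = 1) (hK : 1 < K)
    (hξθ : (inner ℝ ξ θ : ℝ) < 0) :
    let ω₂ : ℝ := ‖ξ‖ ^ 2 / (-(inner ℝ ξ θ : ℝ) + Real.sqrt ((inner ℝ ξ θ : ℝ) ^ 2 + ‖ξ‖ ^ 2 * (K ^ 2 - 1)))
    let ζ₁ : EuclideanSpace ℝ (Fin 2) := θ - (2 * (inner ℝ ξ θ : ℝ) / ‖ξ‖ ^ 2) • ξ
    let ζ₂ : EuclideanSpace ℝ (Fin 2) := K⁻¹ • (ω₂⁻¹ • ξ + θ)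
    (inner ℝ ζ₁ ζ₂ : ℝ) ≥ 1 / K ∧ (inner ℝ ζ₁ ζ₂ : ℝ) ≠ 0 := by
  intro ω₂ ζ₁ ζ₂
  set a : ℝ := (inner ℝ ξ θ : ℝ) with ha
  have hξ : ξ ≠ 0 := by
    intro h
    rw [h] at ha
    simp at ha
    rw [ha] at hξθ
    exact lt_irrefl 0 hξθ
  have hr : (0:ℝ) < ‖ξ‖ ^ 2 := by
    have := norm_pos_iff.mpr hξ
    positivity
  set r : ℝ := ‖ξ‖ ^ 2 with hrdef
  set s : ℝ := Real.sqrt (a ^ 2 + r * (K ^ 2 - 1)) with hs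
  have hK2 : (0:ℝ) < K ^ 2 - 1 := by nlinarith
  have hpos : 0 < a ^ 2 + r * (K ^ 2 - 1) := by nlinarith [sq_nonneg a, mul_pos hr hK2]
  have hs2 : s ^ 2 = a ^ 2 + r * (K ^ 2 - 1) := Real.sq_sqrt hpos.le
  have hsnn : 0 ≤ s := Real.sqrt_nonneg _
  have hsgt : -a < s := by nlinarith [mul_pos hr hK2]
  have hden : (0:ℝ) < -a + s := by linarith
  have hω : ω₂ = r / (-a + s) := rfl
  have hωinv : ω₂⁻¹ = (-a + s) / r := by
    rw [hω, inv_div]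
  have hK0 : (0:ℝ) < K := by linarith
  have key : (inner ℝ ζ₁ ζ₂ : ℝ) = K⁻¹ * (1 - a * (a + s) / r) := by
    have expand : (inner ℝ ζ₁ ζ₂ : ℝ)
        = K⁻¹ * (ω₂⁻¹ * a + 1 - 2 * a / r * (ω₂⁻¹ * r + a)) := by
      simp only [ζ₁, ζ₂, inner_sub_left, inner_add_right, real_inner_smul_left,
        real_inner_smul_right, real_inner_self_eq_norm_sq, hθ, ← hrdef]
      rw [show (inner ℝ θ ξ : ℝ) = a from real_inner_comm ξ θ]
      ring
    rw [expand, hωinv]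
    clear_value s a r
    field_simp
    ring
  have haas : a * (a + s) ≤ 0 := by nlinarith
  have hge : (inner ℝ ζ₁ ζ₂ : ℝ) ≥ 1 / K := by
    rw [key, one_div]
    have : (1:ℝ) ≤ 1 - a * (a + s) / r := by
      have : a * (a + s) / r ≤ 0 := div_nonpos_of_nonpos_of_nonneg haas hr.le
      linarith
    nlinarith [inv_pos.mpr hK0]
  refine ⟨hge, ?_⟩
  have : (0:ℝ) < 1 / K := by positivity
  intro h
  rw [h] at hge
  linarith
end
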